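/- arXiv:2206.08766 — 4 statements merged into one kernel-verified Lean document; each statement's English description precedes it below -/
import Mathlib

section
/- If φ, ψ : ℝ² → [0,∞) are integrable, radially symmetric, and radially non-increasing (i.e., φ(x) = ρ(|x|) for a non-increasing ρ, and similarly for ψ), then their convolution φ * ψ is radially symmetric and radially non-increasing. -/
open MeasureTheory

open Set Metric Function
open scoped ENNReal

section AuxiliaryLemmas

local notation "E2" => EuclideanSpace ℝ (Fin 2)

private lemma sq_lt_iff_abs_lt_sqrt' (w q : ℝ) : w^2 < q ↔ |w| < Real.sqrt q := by
  constructor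
  · intro h
    have hq : 0 < q := lt_of_le_of_lt (sq_nonneg w) h
    have := Real.sqrt_lt_sqrt (sq_nonneg w) h
    rwa [Real.sqrt_sq_eq_abs] at this
  · intro h
    have hq : 0 < q := by
      by_contra hq
      push_neg at hq
      rw [Real.sqrt_eq_zero_of_nonpos hq] at h
      exact absurd h (not_lt.2 (abs_nonneg w))
    calc w^2 = |w|^2 := (sq_abs w).symm
    _ < (Real.sqrt q)^2 := by
        apply pow_lt_pow_left₀ h (abs_nonneg w) (by norm_num)
    _ = q := Real.sq_sqrt hq.le

private lemma lt_sqrt_iff_sq_lt' (c m : ℝ) (hc : 0 ≤ c) : c < Real.sqrt m ↔ c^2 < m := by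
  simpa [abs_of_nonneg hc] using (sq_lt_iff_abs_lt_sqrt' c m).symm

private lemma vol_sq_le' (m : ℝ) : volume {y : ℝ | y^2 ≤ m} = ENNReal.ofReal (2 * Real.sqrt m) := by
  rcases le_or_gt 0 m with hm | hm
  · have : {y : ℝ | y^2 ≤ m} = Icc (-Real.sqrt m) (Real.sqrt m) := by
      ext y
      simp only [mem_setOf_eq, mem_Icc, ← abs_le]
      constructor
      · intro h
        have := Real.sqrt_le_sqrt h
        rwa [Real.sqrt_sq_eq_abs] at this
      · intro h
        calc y^2 = |y|^2 := (sq_abs y).symm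
        _ ≤ (Real.sqrt m)^2 := pow_le_pow_left₀ (abs_nonneg y) h 2
        _ = m := Real.sq_sqrt hm
    rw [this, Real.volume_Icc]
    ring_nf
  · have h0 : {y : ℝ | y^2 ≤ m} = ∅ := by
      ext y; simp only [mem_setOf_eq, mem_empty_iff_false, iff_false, not_le]
      exact lt_of_lt_of_le hm (sq_nonneg y)
    rw [h0, Real.sqrt_eq_zero_of_nonpos hm.le]
    simp

private lemma interval_arith' {d d' α β : ℝ} (hd : 0 ≤ d) (hdd : d ≤ d') :
    min (d' + α) β - max (d' - α) (-β) ≤ min (d + α) β - max (d - α) (-β) := by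
  have h1 : max (d' - α) (-β) = - min (α - d') β := by
    rw [← max_neg_neg]; ring_nf
  have h2 : max (d - α) (-β) = - min (α - d) β := by
    rw [← max_neg_neg]; ring_nf
  rw [h1, h2, sub_neg_eq_add, sub_neg_eq_add]
  rcases le_total (d + α) β with h | h
  · have e1 : min (d + α) β = d + α := min_eq_left h
    have e2 : min (α - d) β = α - d := min_eq_left (by linarith)
    rw [e1, e2]
    have := min_le_left (d' + α) β
    have := min_le_left (α - d') β
    linarith
  · have e1 : min (d + α) β = β := min_eq_right h
    have e2 : min (d' + α) β = β := min_eq_right (by linarith)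
    rw [e1, e2]
    have : min (α - d') β ≤ min (α - d) β := min_le_min (by linarith) le_rfl
    linarith

private lemma discs_meas' (d r₁ r₂ : ℝ) :
    MeasurableSet {p : ℝ × ℝ | (p.1 - d)^2 + p.2^2 ≤ r₁^2 ∧ p.1^2 + p.2^2 ≤ r₂^2} := by
  have c1 : Continuous fun p : ℝ × ℝ => (p.1 - d)^2 + p.2^2 := by fun_prop
  have c2 : Continuous fun p : ℝ × ℝ => p.1^2 + p.2^2 := by fun_prop
  exact (isClosed_le c1 continuous_const).measurableSet.inter
    (isClosed_le c2 continuous_const).measurableSet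

private lemma discs_vol' (d r₁ r₂ : ℝ) :
    volume {p : ℝ × ℝ | (p.1 - d)^2 + p.2^2 ≤ r₁^2 ∧ p.1^2 + p.2^2 ≤ r₂^2}
      = ∫⁻ τ in Ioi (0:ℝ), volume {x : ℝ |
          x ∈ Ioo (d - Real.sqrt (r₁^2 - (τ/2)^2)) (d + Real.sqrt (r₁^2 - (τ/2)^2)) ∧
          x ∈ Ioo (-(Real.sqrt (r₂^2 - (τ/2)^2))) (Real.sqrt (r₂^2 - (τ/2)^2))} := by
  have hprod : (volume : Measure (ℝ × ℝ)) = (volume : Measure ℝ).prod volume :=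
    MeasureTheory.Measure.volume_eq_prod ℝ ℝ
  rw [hprod, Measure.prod_apply (discs_meas' d r₁ r₂)]
  have hslice : ∀ x : ℝ, (Prod.mk x ⁻¹' {p : ℝ × ℝ | (p.1 - d)^2 + p.2^2 ≤ r₁^2 ∧ p.1^2 + p.2^2 ≤ r₂^2})
      = {y : ℝ | y^2 ≤ min (r₁^2 - (x - d)^2) (r₂^2 - x^2)} := by
    intro x
    ext y
    simp only [mem_preimage, mem_setOf_eq, le_min_iff]
    constructor <;> intro h <;> exact ⟨by linarith [h.1], by linarith [h.2]⟩
  simp only [hslice, vol_sq_le']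
  have hcont : Continuous fun x : ℝ => 2 * Real.sqrt (min (r₁^2 - (x - d)^2) (r₂^2 - x^2)) := by
    apply Continuous.mul continuous_const
    exact Real.continuous_sqrt.comp (Continuous.min (by fun_prop) (by fun_prop))
  rw [lintegral_eq_lintegral_meas_lt volume
      (Filter.Eventually.of_forall fun x => mul_nonneg (by norm_num) (Real.sqrt_nonneg _))
      hcont.aemeasurable]
  apply setLIntegral_congr_fun measurableSet_Ioi
  intro τ hτ
  beta_reduce
  congr 1
  ext x
  simp only [mem_setOf_eq, mem_Ioo]
  have hτ2 : 0 ≤ τ / 2 := by have := mem_Ioi.mp hτ; linarith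
  rw [show (τ < 2 * Real.sqrt (min (r₁^2 - (x - d)^2) (r₂^2 - x^2)))
      ↔ (τ/2 < Real.sqrt (min (r₁^2 - (x - d)^2) (r₂^2 - x^2))) by constructor <;> intro h <;> linarith,
    lt_sqrt_iff_sq_lt' _ _ hτ2, lt_min_iff]
  constructor
  · rintro ⟨h1, h2⟩
    have e1 : (x - d)^2 < r₁^2 - (τ/2)^2 := by linarith
    have e2 : x^2 < r₂^2 - (τ/2)^2 := by linarith
    have := (sq_lt_iff_abs_lt_sqrt' _ _).1 e1
    have := (sq_lt_iff_abs_lt_sqrt' _ _).1 e2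
    rw [abs_lt] at *
    refine ⟨⟨by linarith [this.1], by linarith⟩, ?_, ?_⟩ <;>
      linarith [((sq_lt_iff_abs_lt_sqrt' (x-d) _).1 e1)]
  · rintro ⟨⟨h1, h2⟩, h3, h4⟩
    have e1 : |x - d| < Real.sqrt (r₁^2 - (τ/2)^2) := abs_lt.2 ⟨by linarith, by linarith⟩
    have e2 : |x| < Real.sqrt (r₂^2 - (τ/2)^2) := abs_lt.2 ⟨by linarith, by linarith⟩
    have := (sq_lt_iff_abs_lt_sqrt' (x - d) _).2 e1
    have := (sq_lt_iff_abs_lt_sqrt' x _).2 e2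
    exact ⟨by linarith, by linarith⟩

private lemma coreC' {d d' : ℝ} (r₁ r₂ : ℝ) (hd : 0 ≤ d) (hdd : d ≤ d') :
    volume {p : ℝ × ℝ | (p.1 - d')^2 + p.2^2 ≤ r₁^2 ∧ p.1^2 + p.2^2 ≤ r₂^2}
      ≤ volume {p : ℝ × ℝ | (p.1 - d)^2 + p.2^2 ≤ r₁^2 ∧ p.1^2 + p.2^2 ≤ r₂^2} := by
  rw [discs_vol', discs_vol']
  apply lintegral_mono
  intro τ
  beta_reduce
  set α := Real.sqrt (r₁^2 - (τ/2)^2) with hα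
  set β := Real.sqrt (r₂^2 - (τ/2)^2) with hβ
  have : ∀ c : ℝ, {x : ℝ | x ∈ Ioo (c - α) (c + α) ∧ x ∈ Ioo (-β) β}
      = Ioo (max (c - α) (-β)) (min (c + α) β) := by
    intro c; rw [← Ioo_inter_Ioo]; ext x; simp [mem_inter_iff]
  simp only [this, Real.volume_Ioo]
  exact ENNReal.ofReal_le_ofReal (by have := interval_arith' (α := α) (β := β) hd hdd; linarith)

end AuxiliaryLemmas

/-- A function on `ℝ²` is radially symmetric and non-increasing iff its value
depends only on the norm and is non-increasing in the norm. -/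
def RadialNonincreasing (f : EuclideanSpace ℝ (Fin 2) → ℝ) : Prop :=
  ∀ x y : EuclideanSpace ℝ (Fin 2), ‖x‖ ≤ ‖y‖ → f y ≤ f x

section MainAuxiliary

local notation "E2" => EuclideanSpace ℝ (Fin 2)

private noncomputable def e₀' : EuclideanSpace ℝ (Fin 2) := EuclideanSpace.single 0 1

private lemma radial_set_structure' (S : Set E2)
    (hS : ∀ x ∈ S, ∀ y : E2, ‖y‖ ≤ ‖x‖ → y ∈ S) :
    S = univ ∨ ∃ r : ℝ, 0 ≤ r ∧ (S = ball 0 r ∨ S = closedBall 0 r) := by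
  by_cases hb : BddAbove ((fun x : E2 => ‖x‖) '' S)
  · rcases S.eq_empty_or_nonempty with hne | hne
    · right; exact ⟨0, le_rfl, Or.inl (by simp [hne])⟩
    right
    obtain ⟨x₀, hx₀⟩ := hne
    set u := sSup ((fun x : E2 => ‖x‖) '' S) with hu
    have hu0 : 0 ≤ u := le_trans (norm_nonneg x₀) (le_csSup hb ⟨x₀, hx₀, rfl⟩)
    have hcb : S ⊆ closedBall 0 u := fun x hx => by
      rw [mem_closedBall_zero_iff]; exact le_csSup hb ⟨x, hx, rfl⟩
    have hball : ball 0 u ⊆ S := by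
      intro y hy
      rw [mem_ball_zero_iff] at hy
      have himne : ((fun x : E2 => ‖x‖) '' S).Nonempty := ⟨‖x₀‖, x₀, hx₀, rfl⟩
      obtain ⟨a, ⟨x, hxS, rfl⟩, hya⟩ := exists_lt_of_lt_csSup himne hy
      exact hS x hxS y hya.le
    refine ⟨u, hu0, ?_⟩
    by_cases hex : ∃ x ∈ S, ‖x‖ = u
    · right
      obtain ⟨x, hxS, hxu⟩ := hex
      apply Subset.antisymm hcb
      intro y hy
      rw [mem_closedBall_zero_iff] at hy
      exact hS x hxS y (hxu ▸ hy)
    · left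
      apply Subset.antisymm _ hball
      intro x hx
      rw [mem_ball_zero_iff]
      rcases lt_or_eq_of_le (mem_closedBall_zero_iff.1 (hcb hx)) with h | h
      · exact h
      · exact absurd ⟨x, hx, h⟩ hex
  · left
    ext x
    simp only [mem_univ, iff_true]
    rw [not_bddAbove_iff] at hb
    obtain ⟨a, ⟨z, hzS, rfl⟩, hza⟩ := hb ‖x‖
    exact hS z hzS x hza.le

private lemma RadialNonincreasing.measurable' {φ : E2 → ℝ} (hφ : RadialNonincreasing φ) :
    Measurable φ := by
  apply measurable_of_Ioi
  intro t
  have hrad : ∀ x ∈ φ ⁻¹' Ioi t, ∀ y : E2, ‖y‖ ≤ ‖x‖ → y ∈ φ ⁻¹' Ioi t :=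
    fun x hx y hyx => lt_of_lt_of_le hx (hφ y x hyx)
  rcases radial_set_structure' _ hrad with h | ⟨r, _, h | h⟩ <;> rw [h]
  · exact MeasurableSet.univ
  · exact measurableSet_ball
  · exact measurableSet_closedBall

private lemma layer_repr' (m : ℝ≥0∞) :
    (∫⁻ t in Ioi (0:ℝ), (if ENNReal.ofReal t < m then (1:ℝ≥0∞) else 0)) = m := by
  have hset : ∀ t : ℝ, (if ENNReal.ofReal t < m then (1:ℝ≥0∞) else 0)
      = ({s : ℝ | ENNReal.ofReal s < m}).indicator (fun _ => 1) t := by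
    intro t; rw [Set.indicator_apply]; rfl
  simp only [hset]
  have hmeas : MeasurableSet {s : ℝ | ENNReal.ofReal s < m} :=
    measurableSet_lt (ENNReal.measurable_ofReal) measurable_const
  rw [lintegral_indicator hmeas, setLIntegral_one, Measure.restrict_apply hmeas]
  rcases eq_or_ne m ⊤ with hm | hm
  · have : {s : ℝ | ENNReal.ofReal s < m} = univ := by
      ext s; simp [hm, ENNReal.ofReal_lt_top]
    rw [this, univ_inter, Real.volume_Ioi]; exact hm.symm
  · have : {s : ℝ | ENNReal.ofReal s < m} ∩ Ioi 0 = Ioo 0 m.toReal := by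
      ext s
      simp only [mem_inter_iff, mem_setOf_eq, mem_Ioi, mem_Ioo]
      constructor
      · rintro ⟨h1, h2⟩
        exact ⟨h2, (ENNReal.ofReal_lt_iff_lt_toReal h2.le hm).1 h1⟩
      · rintro ⟨h1, h2⟩
        exact ⟨(ENNReal.ofReal_lt_iff_lt_toReal h1.le hm).2 h2, h1⟩
    rw [this, Real.volume_Ioo, sub_zero, ENNReal.ofReal_toReal hm]

private noncomputable def T2' : EuclideanSpace ℝ (Fin 2) ≃ᵐ (ℝ × ℝ) :=
  (MeasurableEquiv.toLp 2 (Fin 2 → ℝ)).symm.trans MeasurableEquiv.finTwoArrow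

private lemma T2_mp' : MeasurePreserving T2' (volume : Measure E2) (volume : Measure (ℝ × ℝ)) :=
  (volume_preserving_finTwoArrow ℝ).comp (EuclideanSpace.volume_preserving_symm_measurableEquiv_toLp (Fin 2))

private lemma norm_le_iff' (v : E2) (r : ℝ) (hr : 0 ≤ r) :
    ‖v‖ ≤ r ↔ (v 0)^2 + (v 1)^2 ≤ r^2 := by
  rw [EuclideanSpace.norm_eq]
  simp only [Real.norm_eq_abs, sq_abs, Fin.sum_univ_two]
  constructor
  · intro h
    calc (v 0)^2 + (v 1)^2 = (Real.sqrt ((v 0)^2 + (v 1)^2))^2 :=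
          (Real.sq_sqrt (by positivity)).symm
    _ ≤ r^2 := pow_le_pow_left₀ (Real.sqrt_nonneg _) h 2
  · intro h
    calc Real.sqrt ((v 0)^2 + (v 1)^2) ≤ Real.sqrt (r^2) := Real.sqrt_le_sqrt h
    _ = r := Real.sqrt_sq hr

private lemma e₀_coords' : e₀' 0 = 1 ∧ e₀' 1 = 0 := by
  constructor <;> simp [e₀', EuclideanSpace.single_apply]

private lemma sub_coords' (d : ℝ) (z : E2) :
    (d • e₀' - z) 0 = d - z 0 ∧ (d • e₀' - z) 1 = - z 1 := by
  have h0 := e₀_coords'.1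
  have h1 := e₀_coords'.2
  constructor
  · simp [PiLp.sub_apply, PiLp.smul_apply, h0, smul_eq_mul]
  · simp [PiLp.sub_apply, PiLp.smul_apply, h1, smul_eq_mul]

private lemma ball_pair_vol' (d r₁ r₂ : ℝ) (h1 : 0 ≤ r₁) (h2 : 0 ≤ r₂) :
    volume {z : E2 | ‖d • e₀' - z‖ ≤ r₁ ∧ ‖z‖ ≤ r₂}
      = volume {p : ℝ × ℝ | (p.1 - d)^2 + p.2^2 ≤ r₁^2 ∧ p.1^2 + p.2^2 ≤ r₂^2} := by
  have hset : {z : E2 | ‖d • e₀' - z‖ ≤ r₁ ∧ ‖z‖ ≤ r₂}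
      = T2' ⁻¹' {p : ℝ × ℝ | (p.1 - d)^2 + p.2^2 ≤ r₁^2 ∧ p.1^2 + p.2^2 ≤ r₂^2} := by
    ext z
    have hc := sub_coords' d z
    simp only [mem_setOf_eq, mem_preimage]
    rw [norm_le_iff' _ _ h1, norm_le_iff' _ _ h2, hc.1, hc.2]
    show _ ↔ ((z 0 - d)^2 + (z 1)^2 ≤ r₁^2 ∧ (z 0)^2 + (z 1)^2 ≤ r₂^2)
    constructor <;> rintro ⟨u1, u2⟩ <;> constructor <;> nlinarith [u1, u2]
  rw [hset]
  exact T2_mp'.measure_preimage (discs_meas' d r₁ r₂).nullMeasurableSet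

private lemma mp_subleft' (c : E2) : MeasurePreserving (fun z : E2 => c - z) volume volume :=
  Measure.measurePreserving_sub_left volume c

private lemma K_mono' (φ ψ : E2 → ℝ) (hφ : RadialNonincreasing φ) (hψ : RadialNonincreasing ψ)
    (a b : ℝ≥0∞) {d d' : ℝ} (hd : 0 ≤ d) (hdd : d ≤ d') :
    volume {z : E2 | a < ENNReal.ofReal (φ (d' • e₀' - z)) ∧ b < ENNReal.ofReal (ψ z)}
      ≤ volume {z : E2 | a < ENNReal.ofReal (φ (d • e₀' - z)) ∧ b < ENNReal.ofReal (ψ z)} := by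
  set Sφ : Set E2 := {w | a < ENNReal.ofReal (φ w)} with hSφ
  set Sψ : Set E2 := {w | b < ENNReal.ofReal (ψ w)} with hSψ
  have hradφ : ∀ x ∈ Sφ, ∀ y : E2, ‖y‖ ≤ ‖x‖ → y ∈ Sφ := by
    intro x hx y hyx
    exact lt_of_lt_of_le hx (ENNReal.ofReal_le_ofReal (hφ y x hyx))
  have hradψ : ∀ x ∈ Sψ, ∀ y : E2, ‖y‖ ≤ ‖x‖ → y ∈ Sψ := by
    intro x hx y hyx
    exact lt_of_lt_of_le hx (ENNReal.ofReal_le_ofReal (hψ y x hyx))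
  have hrw : ∀ c : ℝ, {z : E2 | a < ENNReal.ofReal (φ (c • e₀' - z)) ∧ b < ENNReal.ofReal (ψ z)}
      = {z : E2 | c • e₀' - z ∈ Sφ ∧ z ∈ Sψ} := fun c => rfl
  rw [hrw, hrw]
  rcases radial_set_structure' Sφ hradφ with hφu | ⟨r₁, hr₁, hφb⟩
  · have : ∀ c : ℝ, {z : E2 | c • e₀' - z ∈ Sφ ∧ z ∈ Sψ} = Sψ := by
      intro c; ext z; simp [hφu]
    rw [this, this]
  rcases radial_set_structure' Sψ hradψ with hψu | ⟨r₂, hr₂, hψb⟩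
  · have : ∀ c : ℝ, {z : E2 | c • e₀' - z ∈ Sφ ∧ z ∈ Sψ}
        = (fun z : E2 => c • e₀' - z) ⁻¹' Sφ := by
      intro c; ext z; simp [hψu, mem_preimage]
    have hnm : NullMeasurableSet Sφ (volume : Measure E2) := by
      rcases hφb with h | h <;> rw [h]
      exacts [measurableSet_ball.nullMeasurableSet, measurableSet_closedBall.nullMeasurableSet]
    rw [this, this, (mp_subleft' _).measure_preimage hnm, (mp_subleft' _).measure_preimage hnm]
  · have hae : ∀ c : ℝ, volume {z : E2 | c • e₀' - z ∈ Sφ ∧ z ∈ Sψ}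
        = volume {z : E2 | ‖c • e₀' - z‖ ≤ r₁ ∧ ‖z‖ ≤ r₂} := by
      intro c
      apply measure_congr
      rw [Filter.eventuallyEq_set]
      have hs1 : volume {z : E2 | ‖c • e₀' - z‖ = r₁} = 0 := by
        have : {z : E2 | ‖c • e₀' - z‖ = r₁} = (fun z : E2 => c • e₀' - z) ⁻¹' (sphere 0 r₁) := by
          ext z; simp [mem_sphere_zero_iff_norm]
        rw [this, (mp_subleft' _).measure_preimage
          (NullMeasurableSet.of_null (Measure.addHaar_sphere volume 0 r₁))]
        exact Measure.addHaar_sphere volume 0 r₁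
      have hs2 : volume {z : E2 | ‖z‖ = r₂} = 0 := by
        have : {z : E2 | ‖z‖ = r₂} = sphere (0 : E2) r₂ := by
          ext z; rw [mem_sphere_zero_iff_norm]; rfl
        rw [this]; exact Measure.addHaar_sphere volume 0 r₂
      filter_upwards [measure_eq_zero_iff_ae_notMem.mp hs1, measure_eq_zero_iff_ae_notMem.mp hs2]
        with z hz1 hz2
      have e1 : (c • e₀' - z ∈ Sφ) ↔ ‖c • e₀' - z‖ ≤ r₁ := by
        rcases hφb with h | h <;> rw [h]
        · rw [mem_ball_zero_iff]
          exact ⟨le_of_lt, fun hle => lt_of_le_of_ne hle hz1⟩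
        · rw [mem_closedBall_zero_iff]
      have e2 : (z ∈ Sψ) ↔ ‖z‖ ≤ r₂ := by
        rcases hψb with h | h <;> rw [h]
        · rw [mem_ball_zero_iff]
          exact ⟨le_of_lt, fun hle => lt_of_le_of_ne hle hz2⟩
        · rw [mem_closedBall_zero_iff]
      rw [e1, e2]
    rw [hae, hae, ball_pair_vol' d r₁ r₂ hr₁ hr₂, ball_pair_vol' d' r₁ r₂ hr₁ hr₂]
    exact coreC' r₁ r₂ hd hdd

private lemma claim1' (φ ψ : E2 → ℝ) (hφm : Measurable φ) (hψm : Measurable ψ) (d : ℝ) :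
    ∫⁻ z, ENNReal.ofReal (φ (d • e₀' - z)) * ENNReal.ofReal (ψ z)
      = ∫⁻ t in Ioi (0:ℝ), ∫⁻ s in Ioi (0:ℝ),
          volume {z : E2 | ENNReal.ofReal t < ENNReal.ofReal (φ (d • e₀' - z))
            ∧ ENNReal.ofReal s < ENNReal.ofReal (ψ z)} := by
  set h : E2 → ℝ → ℝ → ℝ≥0∞ := fun z t s =>
    (if ENNReal.ofReal t < ENNReal.ofReal (φ (d • e₀' - z)) then (1:ℝ≥0∞) else 0) *
    (if ENNReal.ofReal s < ENNReal.ofReal (ψ z) then (1:ℝ≥0∞) else 0) with hh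
  have hsub : Measurable fun z : E2 => d • e₀' - z := by fun_prop
  have hΦ : Measurable fun z : E2 => ENNReal.ofReal (φ (d • e₀' - z)) :=
    ENNReal.measurable_ofReal.comp (hφm.comp hsub)
  have hΨ : Measurable fun z : E2 => ENNReal.ofReal (ψ z) :=
    ENNReal.measurable_ofReal.comp hψm
  have step1 : ∀ z : E2, ENNReal.ofReal (φ (d • e₀' - z)) * ENNReal.ofReal (ψ z)
      = ∫⁻ t in Ioi (0:ℝ), ∫⁻ s in Ioi (0:ℝ), h z t s := by
    intro z
    conv_lhs => rw [← layer_repr' (ENNReal.ofReal (φ (d • e₀' - z)))]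
    rw [← lintegral_mul_const' (ENNReal.ofReal (ψ z)) _ ENNReal.ofReal_ne_top]
    apply lintegral_congr
    intro t
    have hne : (if ENNReal.ofReal t < ENNReal.ofReal (φ (d • e₀' - z))
        then (1:ℝ≥0∞) else 0) ≠ ⊤ := by split_ifs <;> simp
    conv_lhs => rw [← layer_repr' (ENNReal.ofReal (ψ z))]
    rw [← lintegral_const_mul' _ _ hne]
  rw [lintegral_congr step1]
  have m1 : Measurable (fun q : (E2 × ℝ) × ℝ => h q.1.1 q.1.2 q.2) := by
    apply Measurable.mul
    · exact Measurable.ite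
        (measurableSet_lt
          (ENNReal.measurable_ofReal.comp ((measurable_snd.comp measurable_fst)))
          (hΦ.comp (measurable_fst.comp measurable_fst)))
        measurable_const measurable_const
    · exact Measurable.ite
        (measurableSet_lt
          (ENNReal.measurable_ofReal.comp measurable_snd)
          (hΨ.comp (measurable_fst.comp measurable_fst)))
        measurable_const measurable_const
  have mf1 : Measurable (uncurry fun z t => ∫⁻ s in Ioi (0:ℝ), h z t s) :=
    Measurable.lintegral_prod_right' (f := fun q : (E2 × ℝ) × ℝ => h q.1.1 q.1.2 q.2) m1
  rw [lintegral_lintegral_swap mf1.aemeasurable]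
  apply lintegral_congr
  intro t
  have m2 : Measurable (fun q : E2 × ℝ => h q.1 t q.2) := by
    apply Measurable.mul
    · exact Measurable.ite
        (measurableSet_lt measurable_const (hΦ.comp measurable_fst))
        measurable_const measurable_const
    · exact Measurable.ite
        (measurableSet_lt (ENNReal.measurable_ofReal.comp measurable_snd)
          (hΨ.comp measurable_fst))
        measurable_const measurable_const
  rw [lintegral_lintegral_swap (f := fun z s => h z t s) m2.aemeasurable]
  apply lintegral_congr
  intro s
  have hind : ∀ z : E2, h z t s
      = Set.indicator {z : E2 | ENNReal.ofReal t < ENNReal.ofReal (φ (d • e₀' - z))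
          ∧ ENNReal.ofReal s < ENNReal.ofReal (ψ z)} (fun _ => (1:ℝ≥0∞)) z := by
    intro z
    simp only [hh, indicator_apply, mem_setOf_eq, ite_and, ite_mul, one_mul, zero_mul]
  have hms : MeasurableSet {z : E2 | ENNReal.ofReal t < ENNReal.ofReal (φ (d • e₀' - z))
      ∧ ENNReal.ofReal s < ENNReal.ofReal (ψ z)} :=
    (hΦ measurableSet_Ioi).inter (hΨ measurableSet_Ioi)
  rw [lintegral_congr hind]
  exact lintegral_indicator_one hms

private lemma radial_eq' {φ : E2 → ℝ} (hφ : RadialNonincreasing φ) {a b : E2} (h : ‖a‖ = ‖b‖) :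
    φ a = φ b :=
  le_antisymm (hφ b a h.ge) (hφ a b h.le)

private lemma lint_iso' {φ ψ : E2 → ℝ} (hφ : RadialNonincreasing φ) (hψ : RadialNonincreasing ψ)
    {w w' : E2} (h : ‖w‖ = ‖w'‖) :
    ∫⁻ z, ENNReal.ofReal (φ (w - z)) * ENNReal.ofReal (ψ z)
      = ∫⁻ z, ENNReal.ofReal (φ (w' - z)) * ENNReal.ofReal (ψ z) := by
  set R := Submodule.reflection (ℝ ∙ (w - w'))ᗮ with hRdef
  have hR : R w = w' := Submodule.reflection_sub h
  have hmp : MeasurePreserving R (volume : Measure E2) volume :=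
    R.measurePreserving
  have hemb : MeasurableEmbedding R := R.toHomeomorph.measurableEmbedding
  rw [← hmp.lintegral_comp_emb hemb
    (fun z => ENNReal.ofReal (φ (w' - z)) * ENNReal.ofReal (ψ z))]
  apply lintegral_congr
  intro z
  have h1 : w' - R z = R (w - z) := by rw [map_sub, hR]
  rw [h1, radial_eq' hφ (R.norm_map (w - z)), radial_eq' hψ (R.norm_map z)]

end MainAuxiliary

theorem convolution_radial_nonincreasing
    (φ ψ : EuclideanSpace ℝ (Fin 2) → ℝ)
    (hφint : Integrable φ) (hψint : Integrable ψ)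
    (hφ0 : ∀ x, 0 ≤ φ x) (hψ0 : ∀ x, 0 ≤ ψ x)
    (hφ : RadialNonincreasing φ) (hψ : RadialNonincreasing ψ) :
    RadialNonincreasing (fun y => ∫ z, φ (y - z) * ψ z) := by
  intro x y hxy
  have hφm : Measurable φ := hφ.measurable'
  have hψm : Measurable ψ := hψ.measurable'
  have he₀ : ∀ c : ℝ, 0 ≤ c → ‖c • e₀'‖ = c := by
    intro c hc
    rw [norm_smul, Real.norm_eq_abs, abs_of_nonneg hc]
    have : ‖e₀'‖ = 1 := by
      rw [e₀', EuclideanSpace.norm_single]; norm_num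
    rw [this, mul_one]
  -- the key representation
  have key : ∀ w : EuclideanSpace ℝ (Fin 2), (∫ z, φ (w - z) * ψ z)
      = (∫⁻ z, ENNReal.ofReal (φ (‖w‖ • e₀' - z)) * ENNReal.ofReal (ψ z)).toReal := by
    intro w
    have haesm : AEStronglyMeasurable (fun z => φ (w - z) * ψ z)
        (volume : Measure (EuclideanSpace ℝ (Fin 2))) := by
      have : Measurable fun z : EuclideanSpace ℝ (Fin 2) => φ (w - z) * ψ z :=
        (hφm.comp (by fun_prop)).mul hψm
      exact this.aestronglyMeasurable
    rw [integral_eq_lintegral_of_nonneg_ae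
      (Filter.Eventually.of_forall fun z => mul_nonneg (hφ0 _) (hψ0 _)) haesm]
    congr 1
    rw [lintegral_congr fun z => ENNReal.ofReal_mul (hφ0 (w - z))]
    exact lint_iso' hφ hψ (by rw [he₀ ‖w‖ (norm_nonneg w)])
  have hG : ∀ c : ℝ, (∫⁻ z, ENNReal.ofReal (φ (c • e₀' - z)) * ENNReal.ofReal (ψ z)) ≠ ⊤ := by
    intro c
    have hbound : (∫⁻ z, ENNReal.ofReal (φ (c • e₀' - z)) * ENNReal.ofReal (ψ z))
        ≤ ENNReal.ofReal (φ 0) * ∫⁻ z, ENNReal.ofReal (ψ z) := by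
      rw [← lintegral_const_mul' _ _ ENNReal.ofReal_ne_top]
      apply lintegral_mono
      intro z
      exact mul_le_mul_left
        (ENNReal.ofReal_le_ofReal (hφ 0 (c • e₀' - z) (by simp))) _
    refine ne_top_of_le_ne_top ?_ hbound
    exact (ENNReal.mul_lt_top ENNReal.ofReal_lt_top hψint.lintegral_lt_top).ne
  -- monotonicity of the lintegral in the norm
  have hmono : (∫⁻ z, ENNReal.ofReal (φ (‖y‖ • e₀' - z)) * ENNReal.ofReal (ψ z))
      ≤ ∫⁻ z, ENNReal.ofReal (φ (‖x‖ • e₀' - z)) * ENNReal.ofReal (ψ z) := by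
    rw [claim1' φ ψ hφm hψm, claim1' φ ψ hφm hψm]
    apply lintegral_mono
    intro t
    apply lintegral_mono
    intro s
    exact K_mono' φ ψ hφ hψ _ _ (norm_nonneg x) hxy
  simp only []
  rw [key y, key x]
  exact ENNReal.toReal_mono (hG ‖x‖) hmono
end

section
/- For any r > 0 and y ∈ ℝ², the function ĥ(w) := Leb(B(-w, r) ∩ B(0, s/2) ∩ B(w, r₂)) (Lebesgue measure of the intersection of three balls in ℝ², for fixed radii r, s/2, r₂ > 0) is radially symmetric and non-increasing in w. -/
set_option maxHeartbeats 1000000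


open MeasureTheory Metric Set

private lemma key_min (a b c t t' : ℝ) (ht : 0 ≤ t) (htt' : t ≤ t') :
    min (min (-t' + a) b) (t' + c) + min (min (t' + a) b) (c - t') ≤
      min (min (-t + a) b) (t + c) + min (min (t + a) b) (c - t) := by
  rcases eq_or_lt_of_le (ht.trans htt') with h0 | h0
  · obtain rfl : t' = 0 := h0.symm
    obtain rfl : t = 0 := le_antisymm htt' ht
    exact le_rfl
  · set l := (t' + t) / (2 * t') with hld
    set m := (t' - t) / (2 * t') with hmd
    have hl : 0 ≤ l := div_nonneg (by linarith) (by linarith)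
    have hm : 0 ≤ m := div_nonneg (by linarith) (by linarith)
    have hlm : l + m = 1 := by rw [hld, hmd]; field_simp; ring
    set p := min (min (-t' + a) b) (t' + c) with hpd
    set q := min (min (t' + a) b) (c - t') with hqd
    have hp1 : p ≤ -t' + a := le_trans (min_le_left _ _) (min_le_left _ _)
    have hp2 : p ≤ b := le_trans (min_le_left _ _) (min_le_right _ _)
    have hp3 : p ≤ t' + c := min_le_right _ _
    have hq1 : q ≤ t' + a := le_trans (min_le_left _ _) (min_le_left _ _)
    have hq2 : q ≤ b := le_trans (min_le_left _ _) (min_le_right _ _)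
    have hq3 : q ≤ c - t' := min_le_right _ _
    have e1 : l * (-t' + a) + m * (t' + a) = -t + a := by
      rw [hld, hmd]; field_simp; ring
    have e2 : l * (t' + c) + m * (c - t') = t + c := by
      rw [hld, hmd]; field_simp; ring
    have e1' : m * (-t' + a) + l * (t' + a) = t + a := by
      rw [hld, hmd]; field_simp; ring
    have e2' : m * (t' + c) + l * (c - t') = c - t := by
      rw [hld, hmd]; field_simp; ring
    have eb : l * b + m * b = b := by linear_combination b * hlm
    have A1 : l * p + m * q ≤ -t + a := by
      linarith [mul_le_mul_of_nonneg_left hp1 hl, mul_le_mul_of_nonneg_left hq1 hm, e1]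
    have A2 : l * p + m * q ≤ b := by
      linarith [mul_le_mul_of_nonneg_left hp2 hl, mul_le_mul_of_nonneg_left hq2 hm, eb]
    have A3 : l * p + m * q ≤ t + c := by
      linarith [mul_le_mul_of_nonneg_left hp3 hl, mul_le_mul_of_nonneg_left hq3 hm, e2]
    have B1 : m * p + l * q ≤ t + a := by
      linarith [mul_le_mul_of_nonneg_left hp1 hm, mul_le_mul_of_nonneg_left hq1 hl, e1']
    have B2 : m * p + l * q ≤ b := by
      linarith [mul_le_mul_of_nonneg_left hp2 hm, mul_le_mul_of_nonneg_left hq2 hl, eb]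
    have B3 : m * p + l * q ≤ c - t := by
      linarith [mul_le_mul_of_nonneg_left hp3 hm, mul_le_mul_of_nonneg_left hq3 hl, e2']
    have hA : l * p + m * q ≤ min (min (-t + a) b) (t + c) := le_min (le_min A1 A2) A3
    have hB : m * p + l * q ≤ min (min (t + a) b) (c - t) := le_min (le_min B1 B2) B3
    have hsum : p + q = (l * p + m * q) + (m * p + l * q) := by
      linear_combination (-(p : ℝ) - q) * hlm
    linarith

private lemma vol_mono (a b c t t' : ℝ) (ht : 0 ≤ t) (htt' : t ≤ t') :
    volume (Ioo (-t' - a) (-t' + a) ∩ Ioo (-b) b ∩ Ioo (t' - c) (t' + c)) ≤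
      volume (Ioo (-t - a) (-t + a) ∩ Ioo (-b) b ∩ Ioo (t - c) (t + c)) := by
  have hmax : ∀ s : ℝ, (-s - a) ⊔ (-b) ⊔ (s - c) = -(min (min (s + a) b) (c - s)) := by
    intro s
    rw [show -s - a = -(s + a) by ring, show s - c = -(c - s) by ring]
    rw [max_neg_neg, max_neg_neg]
  have hmin : ∀ s : ℝ, (-s + a) ⊓ b ⊓ (s + c) = min (min (-s + a) b) (s + c) := by
    intro s; rfl
  rw [Set.Ioo_inter_Ioo, Set.Ioo_inter_Ioo, Set.Ioo_inter_Ioo, Set.Ioo_inter_Ioo,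
    Real.volume_Ioo, Real.volume_Ioo]
  apply ENNReal.ofReal_le_ofReal
  rw [hmax t, hmax t', hmin t, hmin t', sub_neg_eq_add, sub_neg_eq_add]
  exact key_min a b c t t' ht htt'

private lemma slice_iff (c A y : ℝ) :
    (y - c) ^ 2 < A ↔ (c - Real.sqrt A < y ∧ y < c + Real.sqrt A) := by
  rw [show (y - c) ^ 2 = |y - c| ^ 2 by rw [sq_abs], ← Real.lt_sqrt (abs_nonneg _),
    abs_sub_lt_iff]
  constructor <;> rintro ⟨h1, h2⟩ <;> constructor <;> linarith

private lemma core (r r₂ s2 t t' : ℝ) (hr : 0 < r) (hr₂ : 0 < r₂) (hs2 : 0 < s2)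
    (ht : 0 ≤ t) (htt' : t ≤ t') :
    volume (ball (-(t' • EuclideanSpace.single (1 : Fin 2) (1 : ℝ))) r ∩
        ball (0 : EuclideanSpace ℝ (Fin 2)) s2 ∩
        ball (t' • EuclideanSpace.single (1 : Fin 2) (1 : ℝ)) r₂) ≤
      volume (ball (-(t • EuclideanSpace.single (1 : Fin 2) (1 : ℝ))) r ∩
        ball (0 : EuclideanSpace ℝ (Fin 2)) s2 ∩
        ball (t • EuclideanSpace.single (1 : Fin 2) (1 : ℝ)) r₂) := by
  have hdist : ∀ (z c : EuclideanSpace ℝ (Fin 2)) (R : ℝ), 0 < R →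
      (dist z c < R ↔ (z 0 - c 0) ^ 2 + (z 1 - c 1) ^ 2 < R ^ 2) := by
    intro z c R hR
    rw [EuclideanSpace.dist_eq, Real.sqrt_lt' hR, Fin.sum_univ_two, Real.dist_eq,
      Real.dist_eq, sq_abs, sq_abs]
  have htrans : ∀ τ : ℝ,
      volume (ball (-(τ • EuclideanSpace.single (1 : Fin 2) (1 : ℝ))) r ∩
          ball (0 : EuclideanSpace ℝ (Fin 2)) s2 ∩
          ball (τ • EuclideanSpace.single (1 : Fin 2) (1 : ℝ)) r₂)
        = ∫⁻ x : ℝ,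
            volume (Ioo (-τ - Real.sqrt (r ^ 2 - x ^ 2)) (-τ + Real.sqrt (r ^ 2 - x ^ 2)) ∩
              Ioo (-Real.sqrt (s2 ^ 2 - x ^ 2)) (Real.sqrt (s2 ^ 2 - x ^ 2)) ∩
              Ioo (τ - Real.sqrt (r₂ ^ 2 - x ^ 2)) (τ + Real.sqrt (r₂ ^ 2 - x ^ 2))) := by
    intro τ
    set T : Set (ℝ × ℝ) :=
      {p : ℝ × ℝ | p.1 ^ 2 + (p.2 + τ) ^ 2 < r ^ 2} ∩
        ({p : ℝ × ℝ | p.1 ^ 2 + p.2 ^ 2 < s2 ^ 2} ∩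
          {p : ℝ × ℝ | p.1 ^ 2 + (p.2 - τ) ^ 2 < r₂ ^ 2}) with hT
    have hTmeas : MeasurableSet T := by
      refine (measurableSet_lt (by fun_prop) measurable_const).inter
        ((measurableSet_lt (by fun_prop) measurable_const).inter
          (measurableSet_lt (by fun_prop) measurable_const))
    have hgp : MeasurePreserving
        (⇑(MeasurableEquiv.finTwoArrow) ∘ ⇑((MeasurableEquiv.toLp 2 (Fin 2 → ℝ)).symm))
        volume volume :=
      (volume_preserving_finTwoArrow ℝ).comp
        (EuclideanSpace.volume_preserving_symm_measurableEquiv_toLp (Fin 2))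
    have hsingle0 : (τ • EuclideanSpace.single (1 : Fin 2) (1 : ℝ)) 0 = 0 := by
      simp [EuclideanSpace.single_apply]
    have hsingle1 : (τ • EuclideanSpace.single (1 : Fin 2) (1 : ℝ)) 1 = τ := by
      simp [EuclideanSpace.single_apply]
    have hpre :
        (⇑(MeasurableEquiv.finTwoArrow) ∘ ⇑((MeasurableEquiv.toLp 2 (Fin 2 → ℝ)).symm)) ⁻¹' T
          = ball (-(τ • EuclideanSpace.single (1 : Fin 2) (1 : ℝ))) r ∩
              ball (0 : EuclideanSpace ℝ (Fin 2)) s2 ∩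
              ball (τ • EuclideanSpace.single (1 : Fin 2) (1 : ℝ)) r₂ := by
      ext x
      simp only [hT, mem_preimage, Function.comp_apply, mem_inter_iff, mem_ball,
        mem_setOf_eq, MeasurableEquiv.finTwoArrow_apply]
      rw [hdist x _ r hr, hdist x _ s2 hs2, hdist x _ r₂ hr₂]
      simp only [PiLp.neg_apply, PiLp.zero_apply, hsingle0, hsingle1]
      have hx0 : ((MeasurableEquiv.toLp 2 (Fin 2 → ℝ)).symm) x 0 = x 0 := rfl
      have hx1 : ((MeasurableEquiv.toLp 2 (Fin 2 → ℝ)).symm) x 1 = x 1 := rfl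
      rw [hx0, hx1]
      constructor
      · rintro ⟨h1, h2, h3⟩
        refine ⟨⟨by nlinarith, by nlinarith⟩, by nlinarith⟩
      · rintro ⟨⟨h1, h2⟩, h3⟩
        exact ⟨by nlinarith, by nlinarith, by nlinarith⟩
    calc volume (ball (-(τ • EuclideanSpace.single (1 : Fin 2) (1 : ℝ))) r ∩
          ball (0 : EuclideanSpace ℝ (Fin 2)) s2 ∩
          ball (τ • EuclideanSpace.single (1 : Fin 2) (1 : ℝ)) r₂)
        = volume ((⇑(MeasurableEquiv.finTwoArrow) ∘
            ⇑((MeasurableEquiv.toLp 2 (Fin 2 → ℝ)).symm)) ⁻¹' T) := by rw [hpre]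
      _ = volume T := hgp.measure_preimage hTmeas.nullMeasurableSet
      _ = ∫⁻ x : ℝ, volume (Prod.mk x ⁻¹' T) := by
          rw [Measure.volume_eq_prod, Measure.prod_apply hTmeas]
      _ = _ := by
          refine lintegral_congr fun x => ?_
          have hset : Prod.mk x ⁻¹' T =
              Ioo (-τ - Real.sqrt (r ^ 2 - x ^ 2)) (-τ + Real.sqrt (r ^ 2 - x ^ 2)) ∩
                Ioo (-Real.sqrt (s2 ^ 2 - x ^ 2)) (Real.sqrt (s2 ^ 2 - x ^ 2)) ∩
                Ioo (τ - Real.sqrt (r₂ ^ 2 - x ^ 2)) (τ + Real.sqrt (r₂ ^ 2 - x ^ 2)) := by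
            ext y
            simp only [hT, mem_preimage, mem_inter_iff, mem_setOf_eq, mem_Ioo]
            have i1 : x ^ 2 + (y + τ) ^ 2 < r ^ 2 ↔
                (-τ - Real.sqrt (r ^ 2 - x ^ 2) < y ∧ y < -τ + Real.sqrt (r ^ 2 - x ^ 2)) := by
              rw [show x ^ 2 + (y + τ) ^ 2 < r ^ 2 ↔ (y - (-τ)) ^ 2 < r ^ 2 - x ^ 2 by
                constructor <;> intro h <;> nlinarith, slice_iff]
            have i2 : x ^ 2 + y ^ 2 < s2 ^ 2 ↔
                (-Real.sqrt (s2 ^ 2 - x ^ 2) < y ∧ y < Real.sqrt (s2 ^ 2 - x ^ 2)) := by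
              rw [show x ^ 2 + y ^ 2 < s2 ^ 2 ↔ (y - 0) ^ 2 < s2 ^ 2 - x ^ 2 by
                constructor <;> intro h <;> nlinarith, slice_iff, zero_sub, zero_add]
            have i3 : x ^ 2 + (y - τ) ^ 2 < r₂ ^ 2 ↔
                (τ - Real.sqrt (r₂ ^ 2 - x ^ 2) < y ∧ y < τ + Real.sqrt (r₂ ^ 2 - x ^ 2)) := by
              rw [show x ^ 2 + (y - τ) ^ 2 < r₂ ^ 2 ↔ (y - τ) ^ 2 < r₂ ^ 2 - x ^ 2 by
                constructor <;> intro h <;> nlinarith, slice_iff]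
            rw [i1, i2, i3]
            tauto
          rw [hset]
  rw [htrans t, htrans t']
  exact lintegral_mono fun x => vol_mono _ _ _ _ _ ht htt'

theorem triple_ball_intersection_radial_nonincreasing
    (r r₂ s2 : ℝ) (hr : 0 < r) (hr₂ : 0 < r₂) (hs2 : 0 < s2)
    (w w' : EuclideanSpace ℝ (Fin 2)) (hww' : ‖w‖ ≤ ‖w'‖) :
    volume (ball (-w') r ∩ ball (0 : EuclideanSpace ℝ (Fin 2)) s2 ∩ ball w' r₂) ≤
      volume (ball (-w) r ∩ ball (0 : EuclideanSpace ℝ (Fin 2)) s2 ∩ ball w r₂) := by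
  have halign : ∀ v : EuclideanSpace ℝ (Fin 2),
      volume (ball (-v) r ∩ ball (0 : EuclideanSpace ℝ (Fin 2)) s2 ∩ ball v r₂)
        = volume (ball (-(‖v‖ • EuclideanSpace.single (1 : Fin 2) (1 : ℝ))) r ∩
            ball (0 : EuclideanSpace ℝ (Fin 2)) s2 ∩
            ball (‖v‖ • EuclideanSpace.single (1 : Fin 2) (1 : ℝ)) r₂) := by
    intro v
    set u : EuclideanSpace ℝ (Fin 2) := ‖v‖ • EuclideanSpace.single (1 : Fin 2) (1 : ℝ) with hu
    have hnorm : ‖u‖ = ‖v‖ := by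
      rw [hu, norm_smul, EuclideanSpace.norm_single, norm_one, mul_one, norm_norm]
    set f := Submodule.reflection (ℝ ∙ (u - v))ᗮ with hf
    have hfu : f u = v := Submodule.reflection_sub hnorm
    have hpre : ⇑f ⁻¹' (ball (-v) r ∩ ball (0 : EuclideanSpace ℝ (Fin 2)) s2 ∩ ball v r₂)
        = ball (-u) r ∩ ball (0 : EuclideanSpace ℝ (Fin 2)) s2 ∩ ball u r₂ := by
      ext x
      simp only [mem_preimage, mem_inter_iff, mem_ball]
      have d1 : dist (f x) (-v) = dist x (-u) := by
        conv_lhs => rw [show -v = f (-u) by rw [← hfu]; simp]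
        exact f.dist_map x (-u)
      have d2 : dist (f x) (0 : EuclideanSpace ℝ (Fin 2)) = dist x 0 := by
        conv_lhs => rw [show (0 : EuclideanSpace ℝ (Fin 2)) = f 0 by simp]
        exact f.dist_map x 0
      have d3 : dist (f x) v = dist x u := by
        conv_lhs => rw [← hfu]
        exact f.dist_map x u
      rw [d1, d2, d3]
    have hmeas : MeasurableSet
        (ball (-v) r ∩ ball (0 : EuclideanSpace ℝ (Fin 2)) s2 ∩ ball v r₂) :=
      ((isOpen_ball.inter isOpen_ball).inter isOpen_ball).measurableSet
    calc volume (ball (-v) r ∩ ball (0 : EuclideanSpace ℝ (Fin 2)) s2 ∩ ball v r₂)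
        = volume (⇑f ⁻¹' (ball (-v) r ∩ ball (0 : EuclideanSpace ℝ (Fin 2)) s2 ∩ ball v r₂)) :=
          (f.measurePreserving.measure_preimage hmeas.nullMeasurableSet).symm
      _ = _ := by rw [hpre]
  rw [halign w, halign w']
  exact core r r₂ s2 ‖w‖ ‖w'‖ hr hr₂ hs2 (norm_nonneg w) hww'
end

section
/- For any radii r, t > 0 and y ∈ ℝ², Leb(B(y/2, r) ∩ B(-y/2, r) ∩ B(0, t)) ≥ Leb(B(y, r) ∩ B(0, r) ∩ B(0, t)), where B(z,r) is the Euclidean ball in ℝ² and Leb is Lebesgue measure. -/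
open MeasureTheory Metric Set

/-- The 1D concavity fact behind Anderson's inequality. -/
lemma anderson_min_ineq (R T c : ℝ) : min R T + min (R - c) T ≤ 2 * min (R - c / 2) T := by
  rcases le_total (R - c / 2) T with h | h
  · rw [min_eq_left h]
    have h1 := min_le_left R T
    have h2 := min_le_left (R - c) T
    linarith
  · rw [min_eq_right h]
    have h1 := min_le_right R T
    have h2 := min_le_right (R - c) T
    linarith

/-- Solution set of a quadratic inequality as an interval. -/
lemma sq_lt_iff_mem_Ioo (x m s : ℝ) :
    (x - m) ^ 2 < s ↔ x ∈ Ioo (m - Real.sqrt s) (m + Real.sqrt s) := by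
  rw [← Real.sqrt_lt_sqrt_iff (sq_nonneg _), Real.sqrt_sq_eq_abs, abs_lt, mem_Ioo]
  constructor <;> rintro ⟨h1, h2⟩ <;> constructor <;> linarith

/-- The core two-dimensional inequality, in coordinates. -/
lemma anderson_core (c r t : ℝ) (hc : 0 ≤ c) :
    volume {p : ℝ × ℝ | ((p.1 - c) ^ 2 + p.2 ^ 2 < r ^ 2 ∧ p.1 ^ 2 + p.2 ^ 2 < r ^ 2) ∧
        p.1 ^ 2 + p.2 ^ 2 < t ^ 2} ≤
      volume {p : ℝ × ℝ | ((p.1 - c / 2) ^ 2 + p.2 ^ 2 < r ^ 2 ∧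
        (p.1 + c / 2) ^ 2 + p.2 ^ 2 < r ^ 2) ∧ p.1 ^ 2 + p.2 ^ 2 < t ^ 2} := by
  have hmeas : ∀ (a b : ℝ), MeasurableSet {p : ℝ × ℝ | ((p.1 - a) ^ 2 + p.2 ^ 2 < r ^ 2 ∧
      (p.1 - b) ^ 2 + p.2 ^ 2 < r ^ 2) ∧ p.1 ^ 2 + p.2 ^ 2 < t ^ 2} := by
    intro a b
    have h : ∀ g : ℝ × ℝ → ℝ, Continuous g → ∀ s : ℝ, IsOpen {p : ℝ × ℝ | g p < s} :=
      fun g hg s => isOpen_lt hg continuous_const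
    exact (((h _ (by continuity) _).inter (h _ (by continuity) _)).inter
      (h _ (by continuity) _)).measurableSet
  have h1 := hmeas c 0
  have h2 := hmeas (c / 2) (-(c / 2))
  simp only [sub_zero, sub_neg_eq_add] at h1 h2
  rw [Measure.volume_eq_prod, Measure.prod_apply_symm h1, Measure.prod_apply_symm h2]
  apply lintegral_mono
  intro b
  set R : ℝ := Real.sqrt (r ^ 2 - b ^ 2) with hR
  set T : ℝ := Real.sqrt (t ^ 2 - b ^ 2) with hT
  have hsec : ∀ (a : ℝ) (s : ℝ), ((· , b) ⁻¹' {p : ℝ × ℝ | (p.1 - a) ^ 2 + p.2 ^ 2 < s ^ 2})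
      = Ioo (a - Real.sqrt (s ^ 2 - b ^ 2)) (a + Real.sqrt (s ^ 2 - b ^ 2)) := by
    intro a s
    ext x
    simp only [mem_preimage, mem_setOf_eq]
    rw [← sq_lt_iff_mem_Ioo]
    constructor <;> intro h <;> nlinarith
  have e1 : ((· , b) ⁻¹' {p : ℝ × ℝ | ((p.1 - c) ^ 2 + p.2 ^ 2 < r ^ 2 ∧
      p.1 ^ 2 + p.2 ^ 2 < r ^ 2) ∧ p.1 ^ 2 + p.2 ^ 2 < t ^ 2})
      = Ioo (c - R) (c + R) ∩ Ioo (0 - R) (0 + R) ∩ Ioo (0 - T) (0 + T) := by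
    ext x
    have := hsec c r
    have := hsec 0 r
    have := hsec 0 t
    simp only [mem_preimage, mem_setOf_eq, mem_inter_iff] at *
    rw [← sq_lt_iff_mem_Ioo, ← sq_lt_iff_mem_Ioo, ← sq_lt_iff_mem_Ioo]
    constructor <;> rintro ⟨⟨u1, u2⟩, u3⟩ <;> exact ⟨⟨by nlinarith, by nlinarith⟩, by nlinarith⟩
  have e2 : ((· , b) ⁻¹' {p : ℝ × ℝ | ((p.1 - c / 2) ^ 2 + p.2 ^ 2 < r ^ 2 ∧
      (p.1 + c / 2) ^ 2 + p.2 ^ 2 < r ^ 2) ∧ p.1 ^ 2 + p.2 ^ 2 < t ^ 2})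
      = Ioo (c / 2 - R) (c / 2 + R) ∩ Ioo (-(c / 2) - R) (-(c / 2) + R) ∩ Ioo (0 - T) (0 + T) := by
    ext x
    simp only [mem_preimage, mem_setOf_eq, mem_inter_iff]
    rw [← sq_lt_iff_mem_Ioo, ← sq_lt_iff_mem_Ioo, ← sq_lt_iff_mem_Ioo]
    constructor <;> rintro ⟨⟨u1, u2⟩, u3⟩ <;> exact ⟨⟨by nlinarith, by nlinarith⟩, by nlinarith⟩
  dsimp only
  rw [e1, e2, Ioo_inter_Ioo, Ioo_inter_Ioo, Ioo_inter_Ioo, Ioo_inter_Ioo,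
    Real.volume_Ioo, Real.volume_Ioo]
  apply ENNReal.ofReal_le_ofReal
  have hR0 : 0 ≤ R := Real.sqrt_nonneg _
  have hT0 : 0 ≤ T := Real.sqrt_nonneg _
  have m1 : min (c + R) (0 + R) = R := by rw [min_eq_right (by linarith), zero_add]
  have m2 : max (c - R) (0 - R) = c - R := by rw [max_eq_left (by linarith)]
  have m3 : min (c / 2 + R) (-(c / 2) + R) = R - c / 2 := by
    rw [min_eq_right (by linarith)]; ring
  have m4 : max (c / 2 - R) (-(c / 2) - R) = c / 2 - R := by
    rw [max_eq_left (by linarith)]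
  have n1 : max (c - R) (0 - T) = -min (R - c) T := by
    rw [show c - R = -(R - c) by ring, show (0:ℝ) - T = -T by ring, max_neg_neg]
  have n2 : max (c / 2 - R) (0 - T) = -min (R - c / 2) T := by
    rw [show c / 2 - R = -(R - c / 2) by ring, show (0:ℝ) - T = -T by ring, max_neg_neg]
  rw [m1, m2, m3, m4, n1, n2]
  simp only [zero_add]
  have key := anderson_min_ineq R T c
  linarith

lemma anderson_open_meas (g1 g2 g3 : ℝ × ℝ → ℝ) (h1 : Continuous g1) (h2 : Continuous g2)
    (h3 : Continuous g3) (s1 s2 s3 : ℝ) :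
    MeasurableSet {p : ℝ × ℝ | (g1 p < s1 ∧ g2 p < s2) ∧ g3 p < s3} :=
  (((isOpen_lt h1 continuous_const).inter (isOpen_lt h2 continuous_const)).inter
    (isOpen_lt h3 continuous_const)).measurableSet

set_option maxHeartbeats 1000000 in
theorem anderson_ball_inequality (r t : ℝ) (hr : 0 < r) (ht : 0 < t)
    (y : EuclideanSpace ℝ (Fin 2)) :
    volume (ball y r ∩ ball (0 : EuclideanSpace ℝ (Fin 2)) r ∩ ball (0 : EuclideanSpace ℝ (Fin 2)) t) ≤
      volume (ball ((2 : ℝ)⁻¹ • y) r ∩ ball (-((2 : ℝ)⁻¹ • y)) r ∩ ball (0 : EuclideanSpace ℝ (Fin 2)) t) := by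
  set c : ℝ := ‖y‖ with hc
  set w : EuclideanSpace ℝ (Fin 2) := EuclideanSpace.single 0 c with hw
  have hnorm : ‖y‖ = ‖w‖ := by
    rw [hw, EuclideanSpace.norm_single, hc, norm_norm]
  set f : EuclideanSpace ℝ (Fin 2) ≃ₗᵢ[ℝ] EuclideanSpace ℝ (Fin 2) :=
    Submodule.reflection (ℝ ∙ (y - w))ᗮ with hf
  have hfy : f y = w := Submodule.reflection_sub hnorm
  have hball : ∀ (z : EuclideanSpace ℝ (Fin 2)) (ρ : ℝ), f ⁻¹' ball z ρ = ball (f.symm z) ρ := by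
    intro z ρ
    ext x
    rw [mem_preimage, mem_ball, mem_ball]
    conv_lhs => rw [← f.apply_symm_apply z, f.dist_map]
  have hsymm_w : f.symm w = y := by rw [← hfy, f.symm_apply_apply]
  have hsymm_0 : f.symm (0 : EuclideanSpace ℝ (Fin 2)) = 0 := f.symm.map_zero
  have hsymm_half : f.symm ((2 : ℝ)⁻¹ • w) = (2 : ℝ)⁻¹ • y := by
    rw [f.symm.map_smul, hsymm_w]
  have hsymm_neg : f.symm (-((2 : ℝ)⁻¹ • w)) = -((2 : ℝ)⁻¹ • y) := by
    have := congrArg Neg.neg hsymm_half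
    simpa using this
  have hmp := f.measurePreserving
  have e1 : ball y r ∩ ball (0 : EuclideanSpace ℝ (Fin 2)) r ∩ ball (0 : EuclideanSpace ℝ (Fin 2)) t
      = f ⁻¹' (ball w r ∩ ball (0 : EuclideanSpace ℝ (Fin 2)) r ∩ ball (0 : EuclideanSpace ℝ (Fin 2)) t) := by
    rw [preimage_inter, preimage_inter, hball, hball, hball, hsymm_w, hsymm_0]
  have e2 : ball ((2 : ℝ)⁻¹ • y) r ∩ ball (-((2 : ℝ)⁻¹ • y)) r ∩ ball (0 : EuclideanSpace ℝ (Fin 2)) t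
      = f ⁻¹' (ball ((2 : ℝ)⁻¹ • w) r ∩ ball (-((2 : ℝ)⁻¹ • w)) r ∩ ball (0 : EuclideanSpace ℝ (Fin 2)) t) := by
    rw [preimage_inter, preimage_inter, hball, hball, hball, hsymm_half, hsymm_neg, hsymm_0]
  have hmb : ∀ (z₁ z₂ : EuclideanSpace ℝ (Fin 2)),
      NullMeasurableSet (ball z₁ r ∩ ball z₂ r ∩ ball (0 : EuclideanSpace ℝ (Fin 2)) t) volume :=
    fun z₁ z₂ => (((measurableSet_ball.inter measurableSet_ball).inter
      measurableSet_ball)).nullMeasurableSet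
  rw [e1, e2, hmp.measure_preimage (hmb _ _), hmp.measure_preimage (hmb _ _)]
  -- now pass to coordinates in ℝ × ℝ
  set g : EuclideanSpace ℝ (Fin 2) → ℝ × ℝ := fun x => (x 0, x 1) with hg
  have hgmp : MeasurePreserving g volume volume := by
    have h := (volume_preserving_finTwoArrow ℝ).comp
      (EuclideanSpace.volume_preserving_symm_measurableEquiv_toLp (Fin 2))
    exact h
  have hco : ∀ (z : EuclideanSpace ℝ (Fin 2)) (ρ : ℝ), 0 < ρ → ∀ x : EuclideanSpace ℝ (Fin 2),
      (x ∈ ball z ρ ↔ (x 0 - z 0) ^ 2 + (x 1 - z 1) ^ 2 < ρ ^ 2) := by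
    intro z ρ hρ x
    rw [mem_ball, EuclideanSpace.dist_eq, Real.sqrt_lt' hρ, Fin.sum_univ_two]
    simp [Real.dist_eq, sq_abs]
  have h00 : (0 : EuclideanSpace ℝ (Fin 2)) 0 = 0 := rfl
  have h01 : (0 : EuclideanSpace ℝ (Fin 2)) 1 = 0 := rfl
  have hw0 : w 0 = c := by simp [hw, EuclideanSpace.single_apply]
  have hw1 : w 1 = 0 := by simp [hw, EuclideanSpace.single_apply]
  have hA : ball w r ∩ ball (0 : EuclideanSpace ℝ (Fin 2)) r ∩ ball (0 : EuclideanSpace ℝ (Fin 2)) t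
      = g ⁻¹' {p : ℝ × ℝ | ((p.1 - c) ^ 2 + p.2 ^ 2 < r ^ 2 ∧ p.1 ^ 2 + p.2 ^ 2 < r ^ 2) ∧
        p.1 ^ 2 + p.2 ^ 2 < t ^ 2} := by
    ext x
    simp only [mem_inter_iff, mem_preimage, mem_setOf_eq, hco _ _ hr, hco _ _ ht, hg, hw0, hw1, h00, h01]
    constructor <;> rintro ⟨⟨u1, u2⟩, u3⟩ <;>
      refine ⟨⟨by nlinarith [u1], by nlinarith [u2]⟩, by nlinarith [u3]⟩
  have hS : ball ((2 : ℝ)⁻¹ • w) r ∩ ball (-((2 : ℝ)⁻¹ • w)) r ∩ ball (0 : EuclideanSpace ℝ (Fin 2)) t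
      = g ⁻¹' {p : ℝ × ℝ | ((p.1 - c / 2) ^ 2 + p.2 ^ 2 < r ^ 2 ∧
        (p.1 + c / 2) ^ 2 + p.2 ^ 2 < r ^ 2) ∧ p.1 ^ 2 + p.2 ^ 2 < t ^ 2} := by
    have hv0 : ((2 : ℝ)⁻¹ • w) 0 = c / 2 := by simp [hw, EuclideanSpace.single_apply]; ring
    have hv1 : ((2 : ℝ)⁻¹ • w) 1 = 0 := by simp [hw, EuclideanSpace.single_apply]
    have hn0 : (-((2 : ℝ)⁻¹ • w)) 0 = -(c / 2) := by
      have : (-((2 : ℝ)⁻¹ • w)) 0 = -(((2 : ℝ)⁻¹ • w) 0) := rfl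
      rw [this, hv0]
    have hn1 : (-((2 : ℝ)⁻¹ • w)) 1 = 0 := by
      have : (-((2 : ℝ)⁻¹ • w)) 1 = -(((2 : ℝ)⁻¹ • w) 1) := rfl
      rw [this, hv1, neg_zero]
    ext x
    simp only [mem_inter_iff, mem_preimage, mem_setOf_eq, hco _ _ hr, hco _ _ ht, hg,
      hv0, hv1, hn0, hn1, h00, h01]
    constructor <;> rintro ⟨⟨u1, u2⟩, u3⟩ <;>
      refine ⟨⟨by nlinarith [u1], by nlinarith [u2]⟩, by nlinarith [u3]⟩
  have hmeasA : NullMeasurableSet {p : ℝ × ℝ | ((p.1 - c) ^ 2 + p.2 ^ 2 < r ^ 2 ∧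
      p.1 ^ 2 + p.2 ^ 2 < r ^ 2) ∧ p.1 ^ 2 + p.2 ^ 2 < t ^ 2} volume :=
    (anderson_open_meas _ _ _ (by fun_prop) (by fun_prop) (by fun_prop) _ _ _).nullMeasurableSet
  have hmeasS : NullMeasurableSet {p : ℝ × ℝ | ((p.1 - c / 2) ^ 2 + p.2 ^ 2 < r ^ 2 ∧
      (p.1 + c / 2) ^ 2 + p.2 ^ 2 < r ^ 2) ∧ p.1 ^ 2 + p.2 ^ 2 < t ^ 2} volume :=
    (anderson_open_meas _ _ _ (by fun_prop) (by fun_prop) (by fun_prop) _ _ _).nullMeasurableSet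
  rw [hA, hS, hgmp.measure_preimage hmeasA, hgmp.measure_preimage hmeasS]
  exact anderson_core c r t (norm_nonneg y)
end

section
/- Let G_θ(t) = ∫₀^∞ e^{(θ-γ)u} u t^{u-1} / Γ(u+1) du for t ∈ (0,1], where γ is the Euler–Mascheroni constant. Then for every θ ∈ ℝ and t ∈ (0,1], the integral defining G_θ(t) converges and G_θ(t) > 0. -/
open MeasureTheory Real

/-- The Euler–Mascheroni constant, `γ = -∫₀^∞ (log u) e^{-u} du`. -/
noncomputable def eulerGamma : ℝ := -∫ u in Set.Ioi (0 : ℝ), Real.log u * Real.exp (-u)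

lemma Gamma_lower_bound (R : ℝ) (hR : 0 < R) (u : ℝ) (hu : 0 ≤ u) :
    R ^ u * (R * Real.exp (-(2 * R))) ≤ Real.Gamma (u + 1) := by
  have hu1 : (0:ℝ) < u + 1 := by linarith
  have h1 : IntegrableOn (fun x => Real.exp (-x) * x ^ (u + 1 - 1)) (Set.Ioi (0:ℝ)) :=
    Real.GammaIntegral_convergent hu1
  have hsub : Set.Icc R (2 * R) ⊆ Set.Ioi (0:ℝ) := fun x hx => lt_of_lt_of_le hR hx.1
  rw [Real.Gamma_eq_integral hu1]
  calc R ^ u * (R * Real.exp (-(2 * R)))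
      ≤ ∫ x in Set.Icc R (2 * R), Real.exp (-x) * x ^ (u + 1 - 1) := by
        have := setIntegral_ge_of_const_le (c := Real.exp (-(2 * R)) * R ^ u)
          (f := fun x => Real.exp (-x) * x ^ (u + 1 - 1)) measurableSet_Icc
          (by simp [Real.volume_Icc]) (fun x hx => by
            simp only [add_sub_cancel_right]
            apply mul_le_mul
            · exact Real.exp_le_exp.2 (by linarith [hx.2])
            · exact Real.rpow_le_rpow hR.le hx.1 hu
            · exact Real.rpow_nonneg hR.le u
            · exact (Real.exp_pos _).le)
          (h1.mono_set hsub)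
        calc R ^ u * (R * Real.exp (-(2 * R)))
            = Real.exp (-(2 * R)) * R ^ u * (volume (Set.Icc R (2 * R))).toReal := by
              rw [Real.volume_Icc, ENNReal.toReal_ofReal (by linarith)]
              ring_nf
          _ ≤ _ := by rw [smul_eq_mul, mul_comm] at this; exact this
    _ ≤ ∫ x in Set.Ioi 0, Real.exp (-x) * x ^ (u + 1 - 1) := by
        apply setIntegral_mono_set h1
        · filter_upwards [ae_restrict_mem measurableSet_Ioi] with x hx
          exact mul_nonneg (Real.exp_pos _).le (Real.rpow_nonneg (le_of_lt hx) _)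
        · exact HasSubset.Subset.eventuallyLE hsub

theorem G_theta_integrable_and_pos (θ t : ℝ) (ht0 : 0 < t) (ht1 : t ≤ 1) :
    IntegrableOn
        (fun u => Real.exp ((θ - eulerGamma) * u) * u * t ^ (u - 1) / Real.Gamma (u + 1))
        (Set.Ioi (0 : ℝ)) ∧
      0 < ∫ u in Set.Ioi (0 : ℝ),
        Real.exp ((θ - eulerGamma) * u) * u * t ^ (u - 1) / Real.Gamma (u + 1) := by
  set c := θ - eulerGamma with hc
  set f : ℝ → ℝ := fun u => Real.exp (c * u) * u * t ^ (u - 1) / Real.Gamma (u + 1) with hf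
  set R : ℝ := Real.exp (c + 1) with hRdef
  have hR : 0 < R := Real.exp_pos _
  set C : ℝ := t⁻¹ / (R * Real.exp (-(2 * R))) with hCdef
  have hCpos : 0 < C := div_pos (inv_pos.2 ht0) (mul_pos hR (Real.exp_pos _))
  -- pointwise positivity and bound
  have hfpos : ∀ u ∈ Set.Ioi (0:ℝ), 0 < f u := by
    intro u hu
    have hu' : (0:ℝ) < u := hu
    apply div_pos
    · exact mul_pos (mul_pos (Real.exp_pos _) hu') (Real.rpow_pos_of_pos ht0 _)
    · exact Real.Gamma_pos_of_pos (by linarith)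
  have hbound : ∀ u ∈ Set.Ioi (0:ℝ), f u ≤ C * (Real.exp (-u) * u ^ ((2:ℝ) - 1)) := by
    intro u hu
    have hu' : (0:ℝ) < u := hu
    have hΓ : 0 < R ^ u * (R * Real.exp (-(2 * R))) :=
      mul_pos (Real.rpow_pos_of_pos hR u) (mul_pos hR (Real.exp_pos _))
    have hnum : 0 ≤ Real.exp (c * u) * u * t ^ (u - 1) :=
      le_of_lt (mul_pos (mul_pos (Real.exp_pos _) hu') (Real.rpow_pos_of_pos ht0 _))
    have h1 : f u ≤ Real.exp (c * u) * u * t ^ (u - 1) / (R ^ u * (R * Real.exp (-(2 * R)))) :=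
      div_le_div_of_nonneg_left hnum hΓ (Gamma_lower_bound R hR u hu'.le)
    refine h1.trans ?_
    have htle : t ^ (u - 1) ≤ t⁻¹ :=
      calc t ^ (u - 1) = t ^ u * t⁻¹ := by
            rw [Real.rpow_sub ht0, Real.rpow_one, div_eq_mul_inv]
        _ ≤ 1 * t⁻¹ := mul_le_mul_of_nonneg_right
            (Real.rpow_le_one ht0.le ht1 hu'.le) (inv_nonneg.2 ht0.le)
        _ = t⁻¹ := one_mul _
    have hRu : R ^ u = Real.exp ((c + 1) * u) := by
      rw [hRdef, ← Real.exp_mul]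
    rw [hRu]
    have key : Real.exp (c * u) * u * t ^ (u - 1) / (Real.exp ((c + 1) * u) * (R * Real.exp (-(2 * R))))
        = (Real.exp (c * u) / Real.exp ((c + 1) * u)) * u * t ^ (u - 1) / (R * Real.exp (-(2 * R))) := by
      ring
    rw [key, ← Real.exp_sub]
    have : c * u - (c + 1) * u = -u := by ring
    rw [this, show ((2:ℝ) - 1) = 1 by norm_num, Real.rpow_one]
    calc Real.exp (-u) * u * t ^ (u - 1) / (R * Real.exp (-(2 * R)))
        ≤ Real.exp (-u) * u * t⁻¹ / (R * Real.exp (-(2 * R))) := by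
          gcongr
      _ = C * (Real.exp (-u) * u) := by rw [hCdef]; ring
  -- measurability
  have hcont : ContinuousOn f (Set.Ioi (0:ℝ)) := by
    apply ContinuousOn.div
    · apply ContinuousOn.mul
      · exact ((Real.continuous_exp.comp (continuous_const.mul continuous_id)).mul
          continuous_id).continuousOn
      · have : (fun u : ℝ => t ^ (u - 1)) = fun u => Real.exp (Real.log t * (u - 1)) := by
          ext u; rw [Real.rpow_def_of_pos ht0]
        rw [this]
        exact (Real.continuous_exp.comp (continuous_const.mul (continuous_id.sub
          continuous_const))).continuousOn
    · intro u hu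
      have hu' : (0:ℝ) < u := hu
      have hne : ∀ m : ℕ, u + 1 ≠ -m := by
        intro m h
        have : (0:ℝ) ≤ (m:ℝ) := Nat.cast_nonneg m
        linarith
      have hΓc : ContinuousAt Real.Gamma (u + 1) :=
        (Real.differentiableAt_Gamma hne).continuousAt
      have h2 : ContinuousAt (fun x : ℝ => x + 1) u := by fun_prop
      have h3 : ContinuousAt (fun x : ℝ => Real.Gamma (x + 1)) u := ContinuousAt.comp (f := fun x : ℝ => x + 1) hΓc h2
      exact h3.continuousWithinAt
    · intro u hu
      exact (Real.Gamma_pos_of_pos (by linarith [Set.mem_Ioi.1 hu])).ne'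
  have hmeas : AEStronglyMeasurable f (volume.restrict (Set.Ioi (0:ℝ))) :=
    hcont.aestronglyMeasurable measurableSet_Ioi
  -- dominating function integrable
  have hgint : IntegrableOn (fun u => C * (Real.exp (-u) * u ^ ((2:ℝ) - 1)))
      (Set.Ioi (0:ℝ)) :=
    (Real.GammaIntegral_convergent (by norm_num : (0:ℝ) < 2)).const_mul C
  have hint : IntegrableOn f (Set.Ioi (0:ℝ)) := by
    apply Integrable.mono' hgint hmeas
    filter_upwards [ae_restrict_mem measurableSet_Ioi] with u hu
    rw [Real.norm_eq_abs, abs_of_pos (hfpos u hu)]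
    exact hbound u hu
  refine ⟨hint, ?_⟩
  rw [setIntegral_pos_iff_support_of_nonneg_ae]
  · have hsub : Set.Ioi (0:ℝ) ⊆
        (Function.support fun u => Real.exp (c * u) * u * t ^ (u - 1) / Real.Gamma (u + 1))
          ∩ Set.Ioi 0 :=
      fun u hu => ⟨(hfpos u hu).ne', hu⟩
    calc (0:ENNReal) < volume (Set.Ioi (0:ℝ)) := by simp [Real.volume_Ioi]
      _ ≤ _ := measure_mono hsub
  · filter_upwards [ae_restrict_mem measurableSet_Ioi] with u hu
    exact (hfpos u hu).le
  · exact hint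
end
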